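/- Let G be a finite group acting transitively on a finite set S, with permutation representation ρ over a field F of characteristic zero. Suppose B ∈ Matrix S S F commutes with ρ(g) for every g ∈ G and is idempotent (B * B = B). Then every diagonal entry of B equals rank(B) / |S|. -/

import Mathlib

/-- Over a field of characteristic zero, an idempotent matrix `B` commuting
with the permutation representation of a transitive action of a finite group `G` on a
finite set `S` has all diagonal entries equal to `rank(B) / |S|`. -/
theorem stmt_8 {G S F : Type*} [Group G] [Fintype G] [MulAction G S]
    [MulAction.IsPretransitive G S] [Fintype S] [DecidableEq S] [Field F] [CharZero F]
    (ρ : G → Matrix S S F) (hρ : ∀ g : G, ∀ i j : S, ρ g i j = if g • i = j then 1 else 0)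
    (B : Matrix S S F) (hB : ∀ g : G, B * ρ g = ρ g * B) (hidem : B * B = B) :
    ∀ i : S, B i i = (B.rank : F) / (Fintype.card S : F) := by
  classical
  -- equivariance of entries
  have key : ∀ g : G, ∀ i : S, B (g • i) (g • i) = B i i := by
    intro g i
    have h := congrFun (congrFun (hB g) i) (g • i)
    have hL : (B * ρ g) i (g • i) = B i i := by
      simp only [Matrix.mul_apply, hρ]
      rw [Finset.sum_eq_single i]
      · simp
      · intro k _ hk
        rw [if_neg (fun h => hk (smul_left_cancel g h)), mul_zero]
      · simp
    have hR : (ρ g * B) i (g • i) = B (g • i) (g • i) := by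
      simp only [Matrix.mul_apply, hρ]
      rw [Finset.sum_eq_single (g • i)]
      · simp
      · intro k _ hk; rw [if_neg (Ne.symm hk), zero_mul]
      · simp
    rw [← hL, h, hR]
  -- all diagonal entries are equal
  have diag_eq : ∀ i j : S, B i i = B j j := by
    intro i j
    obtain ⟨g, rfl⟩ := MulAction.exists_smul_eq G i j
    exact (key g i).symm
  -- trace = rank
  set f : (S → F) →ₗ[F] (S → F) := B.mulVecLin with hf
  have hff : f ∘ₗ f = f := by
    rw [hf, ← Matrix.mulVecLin_mul, hidem]
  obtain ⟨p, hp⟩ := (LinearMap.isProj_iff_isIdempotentElem f).mpr hff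
  have hpr : p = LinearMap.range f := by
    apply le_antisymm
    · intro x hx
      exact ⟨x, hp.map_id x hx⟩
    · rintro _ ⟨x, rfl⟩
      exact hp.map_mem x
  have htr : LinearMap.trace F (S → F) f = (Module.finrank F p : F) := hp.trace
  have hBmat : LinearMap.toMatrix (Pi.basisFun F S) (Pi.basisFun F S) f = B := by
    rw [LinearMap.toMatrix_eq_toMatrix', hf, ← Matrix.toLin'_apply']
    exact LinearMap.toMatrix'_toLin' B
  have htr2 : LinearMap.trace F (S → F) f = Matrix.trace B := by
    rw [LinearMap.trace_eq_matrix_trace F (Pi.basisFun F S) f, hBmat]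
  have hrank : (B.rank : F) = Matrix.trace B := by
    rw [Matrix.rank, ← hf, ← hpr, ← htr, htr2]
  intro i
  have hsum : Matrix.trace B = (Fintype.card S : F) * B i i := by
    simp only [Matrix.trace, Matrix.diag]
    rw [Finset.sum_congr rfl (fun j _ => diag_eq j i)]
    simp [mul_comm]
  have hcard : (Fintype.card S : F) ≠ 0 :=
    Nat.cast_ne_zero.mpr (Fintype.card_pos_iff.mpr ⟨i⟩).ne'
  field_simp [hrank, hsum]
  rw [hrank, hsum, mul_comm]
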